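/- Let p be a prime and let P_1(γ),...,P_m(γ) ∈ F_p[γ] be polynomials of degree less than p that are linearly independent over F_p. Let Q = gcd(P_1,...,P_m) and set P̄_j = P_j / Q. Then P̄_1, ..., P̄_m are linearly independent over the field F_p(γ^p) of rational functions in γ^p. -/

import Mathlib

open Polynomial

private lemma key_coeff {p : ℕ} [Fact p.Prime] (a b : Polynomial (ZMod p))
    (hb : b.natDegree < p) (d k : ℕ) (hk : k < p) :
    (a.comp (Polynomial.X ^ p) * b).coeff (d * p + k) = a.coeff d * b.coeff k := by
  have hp : 0 < p := (Fact.out : p.Prime).pos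
  rw [← Polynomial.expand_eq_comp_X_pow, Polynomial.coeff_mul]
  rw [Finset.sum_eq_single (d * p, k)]
  · rw [show d * p = p * d by ring, Polynomial.coeff_expand_mul' hp]
  · rintro ⟨i, r⟩ hmem hne
    rw [Finset.HasAntidiagonal.mem_antidiagonal] at hmem
    simp only at hmem ⊢
    by_cases hdvd : p ∣ i
    · obtain ⟨e, rfl⟩ := hdvd
      rcases lt_trichotomy e d with h | h | h
      · have hr : p ≤ r := by
          have : p * (e + 1) ≤ p * d := Nat.mul_le_mul_left p h
          nlinarith [hmem]
        rw [Polynomial.coeff_eq_zero_of_natDegree_lt (lt_of_lt_of_le hb hr), mul_zero]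
      · subst h
        have : r = k := by rw [mul_comm] at hmem; omega
        subst this
        exact absurd (by ring_nf) hne
      · exfalso
        have : p * (d + 1) ≤ p * e := Nat.mul_le_mul_left p h
        nlinarith [hmem]
    · rw [Polynomial.coeff_expand hp, if_neg hdvd, zero_mul]
  · intro h
    simp [Finset.HasAntidiagonal.mem_antidiagonal] at h

/-- Let `P_1,…,P_m ∈ F_p[γ]` have degree `< p` and be linearly independent over
`F_p`. With `Q = gcd(P_1,…,P_m)` and `P̄_j = P_j / Q`, the `P̄_j` are linearly
independent over `F_p(γ^p)` — equivalently (after clearing denominators) there is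
no nontrivial relation `Σ_j c_j(γ^p) · P̄_j(γ) = 0` with polynomials `c_j`. -/
theorem pbar_linearIndependent_over_frobenius_field (p m : ℕ) [Fact p.Prime]
    (P : Fin m → Polynomial (ZMod p))
    (hdeg : ∀ j, (P j).natDegree < p)
    (hli : LinearIndependent (ZMod p) P)
    (Q : Polynomial (ZMod p)) (hQ : Q = Finset.univ.gcd P)
    (Pbar : Fin m → Polynomial (ZMod p)) (hPbar : ∀ j, Pbar j = P j / Q) :
    ∀ c : Fin m → Polynomial (ZMod p),
      (∑ j, (c j).comp (Polynomial.X ^ p) * Pbar j) = 0 → ∀ j, c j = 0 := by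
  intro c hc j0
  have hp : 0 < p := (Fact.out : p.Prime).pos
  have hPne : P j0 ≠ 0 := hli.ne_zero j0
  have hQ0 : Q ≠ 0 := by
    rw [hQ]
    intro h
    exact hPne ((Finset.gcd_eq_zero_iff.mp h) j0 (Finset.mem_univ j0))
  have hmul : ∀ j, Q * Pbar j = P j := by
    intro j
    rw [hPbar]
    exact EuclideanDomain.mul_div_cancel' hQ0 (hQ ▸ Finset.gcd_dvd (Finset.mem_univ j))
  have hdegbar : ∀ j, (Pbar j).natDegree < p := by
    intro j
    by_cases h : Pbar j = 0
    · simpa [h] using hp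
    · have := Polynomial.natDegree_mul hQ0 h
      rw [hmul j] at this
      have h2 := hdeg j
      omega
  -- each coefficient of each c j vanishes
  have hco : ∀ d j, (c j).coeff d = 0 := by
    intro d
    have hsum0 : (∑ j, Polynomial.C ((c j).coeff d) * Pbar j) = 0 := by
      ext k
      simp only [Polynomial.finset_sum_coeff, Polynomial.coeff_C_mul, Polynomial.coeff_zero]
      by_cases hk : k < p
      · have h0 := congrArg (fun q => Polynomial.coeff q (d * p + k)) hc
        simp only [Polynomial.finset_sum_coeff, Polynomial.coeff_zero] at h0
        rw [← h0]
        exact Finset.sum_congr rfl fun j _ =>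
          (key_coeff (c j) (Pbar j) (hdegbar j) d k hk).symm
      · refine Finset.sum_eq_zero fun j _ => ?_
        rw [Polynomial.coeff_eq_zero_of_natDegree_lt (lt_of_lt_of_le (hdegbar j) (le_of_not_gt hk)),
          mul_zero]
    have hrelP : (∑ j, ((c j).coeff d) • P j) = 0 := by
      have : (∑ j, ((c j).coeff d) • P j) = Q * ∑ j, Polynomial.C ((c j).coeff d) * Pbar j := by
        rw [Finset.mul_sum]
        refine Finset.sum_congr rfl fun j _ => ?_
        rw [Polynomial.smul_eq_C_mul, ← hmul j]
        ring
      rw [this, hsum0, mul_zero]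
    exact fun j => Fintype.linearIndependent_iff.mp hli _ hrelP j
  ext d
  simp [hco d j0]
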